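/- Suppose an empirical CDF F_N satisfies sup_x |F(x) − F_N(x)| ≤ ε with ε = (1−A)·(N/(N+2))·2^{−(q+1)} for some A ∈ [0,1], and suppose F_N(i/2^q) − F_N((i−1)/2^q) = (N/(N+2))·2^{−q} for each i = 1, …, 2^q (the balanced property). Then for each bucket i, the true probability mass F(i/2^q) − F((i−1)/2^q) ≥ A·(N/(N+2))·2^{−q}, and consequently the entropy of the distribution over the 2^q buckets is at least q·A·N/(N+2). -/

import Mathlib

noncomputable section
open Finset

/-- Concavity step: if `lam*u ≤ x ≤ 1 - lam + lam*u` with `0 ≤ lam < 1`, `0 ≤ u`, then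
`lam * negMulLog u ≤ negMulLog x`. -/
lemma key_concave (lam u x : ℝ) (hl0 : 0 ≤ lam) (hl1 : lam < 1) (hu0 : 0 ≤ u)
    (hxl : lam * u ≤ x) (hxu : x ≤ 1 - lam + lam * u) :
    lam * Real.negMulLog u ≤ Real.negMulLog x := by
  set s : ℝ := (x - lam * u) / (1 - lam) with hs
  have h1l : (0:ℝ) < 1 - lam := by linarith
  have hs0 : 0 ≤ s := div_nonneg (by linarith) h1l.le
  have hs1 : s ≤ 1 := by rw [div_le_one h1l]; linarith
  have hxeq : x = lam * u + (1 - lam) * s := by rw [hs]; field_simp; ring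
  have hcon := Real.concaveOn_negMulLog.2 (Set.mem_Ici.2 hu0) (Set.mem_Ici.2 hs0)
    hl0 h1l.le (by ring)
  have hnn : 0 ≤ Real.negMulLog s := Real.negMulLog_nonneg hs0 hs1
  simp only [smul_eq_mul] at hcon
  calc lam * Real.negMulLog u
      ≤ lam * Real.negMulLog u + (1 - lam) * Real.negMulLog s := by nlinarith
    _ ≤ Real.negMulLog (lam * u + (1 - lam) * s) := hcon
    _ = Real.negMulLog x := by rw [← hxeq]

/-- Deterministic core of Theorem 1: if the empirical CDF is uniformly `ε`-close to the
true CDF and the empirical buckets are exactly balanced, then every true bucket mass is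
at least `A·(N/(N+2))·2^{-q}` and the bucket entropy is at least `q·A·N/(N+2)`. -/
theorem balanced_geohash_entropy_bound (F FN : ℝ → ℝ)
    (hF0 : F 0 = 0) (hF1 : F 1 = 1) (hFmono : Monotone F)
    (N q : ℕ) (A : ℝ) (hA : A ∈ Set.Icc (0 : ℝ) 1)
    (hclose : ∀ x : ℝ, |F x - FN x| ≤ (1 - A) * ((N : ℝ) / (N + 2)) * (1 / 2 ^ (q + 1)))
    (hbal : ∀ i ∈ Finset.Icc (1 : ℕ) (2 ^ q),
      FN ((i : ℝ) / 2 ^ q) - FN (((i : ℝ) - 1) / 2 ^ q) = ((N : ℝ) / (N + 2)) * (1 / 2 ^ q)) :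
    (∀ i ∈ Finset.Icc (1 : ℕ) (2 ^ q),
        A * ((N : ℝ) / (N + 2)) * (1 / 2 ^ q)
          ≤ F ((i : ℝ) / 2 ^ q) - F (((i : ℝ) - 1) / 2 ^ q)) ∧
      (q : ℝ) * A * ((N : ℝ) / (N + 2))
        ≤ -∑ i ∈ Finset.Icc (1 : ℕ) (2 ^ q),
            (F ((i : ℝ) / 2 ^ q) - F (((i : ℝ) - 1) / 2 ^ q)) *
              Real.logb 2 (F ((i : ℝ) / 2 ^ q) - F (((i : ℝ) - 1) / 2 ^ q)) := by
  obtain ⟨hA0, hA1⟩ := hA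
  set n : ℕ := 2 ^ q with hn
  set r : ℝ := (N : ℝ) / (N + 2) with hr
  set m : ℕ → ℝ := fun i => F ((i : ℝ) / 2 ^ q) - F (((i : ℝ) - 1) / 2 ^ q) with hm
  have hq0 : (0:ℝ) < 2 ^ q := by positivity
  have hr0 : 0 ≤ r := by positivity
  have hr1 : r < 1 := by
    rw [hr, div_lt_one (by positivity)]; linarith
  set lam : ℝ := A * r with hlam
  have hlam0 : 0 ≤ lam := mul_nonneg hA0 hr0
  have hlam1 : lam < 1 := by nlinarith
  set c : ℝ := A * r * (1 / 2 ^ q) with hc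
  -- Part 1: lower bound on each mass
  have hmass : ∀ i ∈ Finset.Icc (1 : ℕ) n, c ≤ m i := by
    intro i hi
    have h1 := abs_le.1 (hclose ((i : ℝ) / 2 ^ q))
    have h2 := abs_le.1 (hclose (((i : ℝ) - 1) / 2 ^ q))
    have h3 := hbal i hi
    have hε : (1 - A) * r * (1 / 2 ^ (q + 1)) = (1 - A) * (r * (1 / 2 ^ q)) / 2 := by
      rw [pow_succ]; ring
    rw [hε] at h1 h2
    simp only [hm, hc]
    have : A * r * (1 / 2 ^ q) = A * (r * (1 / 2 ^ q)) := by ring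
    rw [this]
    set B : ℝ := r * (1 / 2 ^ q)
    linarith [h1.1, h1.2, h2.1, h2.2]
  -- masses sum to 1
  have hsum : ∑ i ∈ Finset.Icc (1 : ℕ) n, m i = 1 := by
    have : ∑ i ∈ Finset.Icc (1 : ℕ) n, m i
        = ∑ i ∈ Finset.range n, ((fun j : ℕ => F ((j : ℝ) / 2 ^ q)) (i + 1)
            - (fun j : ℕ => F ((j : ℝ) / 2 ^ q)) i) := by
      rw [← Finset.Ico_add_one_right_eq_Icc, Finset.sum_Ico_eq_sum_range]
      simp only [Nat.add_sub_cancel]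
      refine Finset.sum_congr rfl fun i _ => ?_
      simp only [hm]
      push_cast
      ring_nf
    rw [this, Finset.sum_range_sub (fun j : ℕ => F ((j:ℝ) / 2 ^ q)) n]
    simp only [Nat.cast_zero, zero_div, hF0, hn]
    push_cast
    rw [div_self (ne_of_gt hq0), hF1]
    ring
  have hcard : (Finset.Icc (1 : ℕ) n).card = n := by
    rw [Nat.card_Icc]; exact Nat.add_sub_cancel _ _
  have hn1 : 1 ≤ n := Nat.one_le_two_pow
  -- per-term upper bound
  have hupper : ∀ i ∈ Finset.Icc (1 : ℕ) n, m i ≤ 1 - ((n : ℝ) - 1) * c := by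
    intro i hi
    have hsplit := Finset.add_sum_erase _ m hi
    have hlow : ((n - 1 : ℕ) : ℝ) * c ≤ ∑ j ∈ (Finset.Icc (1 : ℕ) n).erase i, m j := by
      have := Finset.card_nsmul_le_sum ((Finset.Icc (1 : ℕ) n).erase i) m c
        (fun j hj => hmass j (Finset.mem_of_mem_erase hj))
      rwa [Finset.card_erase_of_mem hi, hcard, nsmul_eq_mul] at this
    have hcast : ((n - 1 : ℕ) : ℝ) = (n : ℝ) - 1 := by
      rw [Nat.cast_sub hn1]; norm_num
    rw [hcast] at hlow
    have := hsum
    linarith [hsplit.ge, hsplit.le]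
  -- entropy bound via concavity
  have hnr : ((n : ℝ)) = 2 ^ q := by rw [hn]; push_cast; ring
  have hterm : ∀ i ∈ Finset.Icc (1 : ℕ) n,
      lam * Real.negMulLog (1 / 2 ^ q) ≤ Real.negMulLog (m i) := by
    intro i hi
    apply key_concave lam (1 / 2 ^ q) (m i) hlam0 hlam1 (by positivity)
    · exact hmass i hi
    · have := hupper i hi
      have : m i ≤ 1 - ((2:ℝ) ^ q - 1) * c := by rwa [hnr] at this
      have hceq : ((2:ℝ) ^ q - 1) * c = lam - lam * (1 / 2 ^ q) := by
        rw [hc, hlam]; field_simp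
      rw [hceq] at this
      linarith
  have hlog2 : (0:ℝ) < Real.log 2 := Real.log_pos (by norm_num)
  have hval : Real.negMulLog ((1:ℝ) / 2 ^ q) = (1 / 2 ^ q) * (q * Real.log 2) := by
    simp only [Real.negMulLog, one_div, Real.log_inv, Real.log_pow]
    push_cast
    ring
  have hsumlog : lam * ((q:ℝ) * Real.log 2)
      ≤ ∑ i ∈ Finset.Icc (1 : ℕ) n, Real.negMulLog (m i) := by
    calc lam * ((q:ℝ) * Real.log 2)
        = (n : ℝ) * (lam * Real.negMulLog (1 / 2 ^ q)) := by
          rw [hval, hnr]; field_simp; try ring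
      _ = ∑ _i ∈ Finset.Icc (1 : ℕ) n, lam * Real.negMulLog (1 / 2 ^ q) := by
          rw [Finset.sum_const, hcard, nsmul_eq_mul]
      _ ≤ _ := Finset.sum_le_sum hterm
  constructor
  · exact hmass
  · have hrw : ∀ i ∈ Finset.Icc (1 : ℕ) n,
        m i * Real.logb 2 (m i) = -(Real.negMulLog (m i) / Real.log 2) := by
      intro i _
      rw [Real.logb, Real.negMulLog]
      field_simp
      try ring
    have heq : -∑ i ∈ Finset.Icc (1 : ℕ) n, m i * Real.logb 2 (m i)
        = (∑ i ∈ Finset.Icc (1 : ℕ) n, Real.negMulLog (m i)) / Real.log 2 := by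
      rw [Finset.sum_congr rfl hrw]
      rw [Finset.sum_neg_distrib, neg_neg, ← Finset.sum_div]
    rw [heq, le_div_iff₀ hlog2]
    calc (q:ℝ) * A * r * Real.log 2 = lam * ((q:ℝ) * Real.log 2) := by rw [hlam]; ring
      _ ≤ _ := hsumlog
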